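/- arXiv:1806.00040 — 4 statements merged into one kernel-verified Lean document; each statement's English description precedes it below -/
import Mathlib

section
/- Let $X \sim \mathcal{N}(0, I_d)$, let $\beta \in \mathbb{R}^d$, let $\eta \sim \mathcal{N}(0,\sigma^2)$ be independent of $X$, and set $y = \beta \cdot X + \eta$ and $\sigma_y^2 = \|\beta\|_2^2 + \sigma^2$. Then for any unit vector $v \in \mathbb{R}^d$, the random variable $(v \cdot X)\, y$ has the same distribution as $\frac{v\cdot\beta + \sigma_y}{2} Z_1^2 + \frac{v\cdot\beta - \sigma_y}{2} Z_2^2$, where $Z_1, Z_2$ are independent standard Gaussians. -/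
open MeasureTheory ProbabilityTheory Real
open scoped NNReal

set_option maxHeartbeats 1000000
open scoped ENNReal

lemma aux_map_withDensity {α β : Type*} [MeasurableSpace α] [MeasurableSpace β]
    (e : α ≃ᵐ β) {μ : Measure α} {ν : Measure β} (h : MeasurePreserving e μ ν)
    (f : β → ℝ≥0∞) (hf : Measurable f) :
    Measure.map e (μ.withDensity (fun x => f (e x))) = ν.withDensity f := by
  ext s hs
  rw [Measure.map_apply e.measurable hs,
    withDensity_apply _ (e.measurable hs), withDensity_apply _ hs]
  have h2 := h.setLIntegral_comp_emb e.measurableEmbedding f (e ⁻¹' s)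
  rwa [Set.image_preimage_eq s e.surjective] at h2

lemma aux_prod_withDensity {α β : Type*} [MeasurableSpace α] [MeasurableSpace β]
    {μ : Measure α} {ν : Measure β} [SigmaFinite μ] [SigmaFinite ν]
    {f : α → ℝ≥0∞} {g : β → ℝ≥0∞} (hf : Measurable f) (hg : Measurable g)
    [SigmaFinite (μ.withDensity f)] [SigmaFinite (ν.withDensity g)] :
    (μ.withDensity f).prod (ν.withDensity g)
      = (μ.prod ν).withDensity (fun p => f p.1 * g p.2) := by
  refine Measure.prod_eq fun s t hs ht => ?_
  rw [withDensity_apply _ (hs.prod ht), ← Measure.prod_restrict,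
    lintegral_prod_mul hf.aemeasurable hg.aemeasurable,
    withDensity_apply _ hs, withDensity_apply _ ht]

lemma aux_prod_gaussianPDF {n : ℕ} (w : Fin n → ℝ) :
    ∏ i, gaussianPDF 0 1 (w i)
      = ENNReal.ofReal ((Real.sqrt (2 * π))⁻¹ ^ n * Real.exp (-(∑ i, w i ^ 2) / 2)) := by
  have h1 : ∀ i : Fin n, gaussianPDF 0 1 (w i)
      = ENNReal.ofReal ((Real.sqrt (2 * π))⁻¹ * Real.exp (-(w i ^ 2) / 2)) := by
    intro i
    rw [gaussianPDF, gaussianPDFReal]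
    norm_num
  simp_rw [h1]
  rw [← ENNReal.ofReal_prod_of_nonneg (fun i _ => by positivity)]
  congr 1
  rw [Finset.prod_mul_distrib, Finset.prod_const, Finset.card_univ, Fintype.card_fin,
    ← Real.exp_sum]
  congr 1
  rw [← Finset.sum_div, ← Finset.sum_neg_distrib]

lemma aux_pi_gaussian (n : ℕ) :
    (Measure.pi fun _ : Fin n => gaussianReal 0 1)
      = (volume : Measure (Fin n → ℝ)).withDensity (fun x => ∏ i, gaussianPDF 0 1 (x i)) := by
  induction n with
  | zero =>
      have h : (fun x : Fin 0 → ℝ => ∏ i, gaussianPDF 0 1 (x i))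
          = (1 : (Fin 0 → ℝ) → ℝ≥0∞) := by
        funext x; simp
      rw [h, withDensity_one]
      rw [Measure.pi_of_empty (fun _ : Fin 0 => gaussianReal 0 1)]
      rw [show (volume : Measure (Fin 0 → ℝ))
          = Measure.pi (fun _ : Fin 0 => (volume : Measure ℝ)) from volume_pi]
      rw [Measure.pi_of_empty]
  | succ n IH =>
      have hγ : gaussianReal 0 1 = (volume : Measure ℝ).withDensity (gaussianPDF 0 1) :=
        gaussianReal_of_var_ne_zero 0 one_ne_zero
      set e := MeasurableEquiv.piFinSuccAbove (fun _ : Fin (n+1) => ℝ) 0 with he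
      have h1 : MeasurePreserving e.symm
          ((volume : Measure ℝ).prod (volume : Measure (Fin n → ℝ)))
          (volume : Measure (Fin (n+1) → ℝ)) := by
        have h := ((measurePreserving_piFinSuccAbove
          (fun _ : Fin (n+1) => (volume : Measure ℝ)) 0).symm e)
        rw [volume_pi, volume_pi]
        exact h
      have h2 : (Measure.pi fun _ : Fin (n+1) => gaussianReal 0 1)
          = Measure.map e.symm
            ((gaussianReal 0 1).prod (Measure.pi fun _ : Fin n => gaussianReal 0 1)) :=
        (((measurePreserving_piFinSuccAbove (fun _ : Fin (n+1) => gaussianReal 0 1) 0).symm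
          e).map_eq).symm
      haveI i1 : SigmaFinite ((volume : Measure ℝ).withDensity (gaussianPDF 0 1)) := by
        rw [← hγ]; infer_instance
      haveI i2 : SigmaFinite ((volume : Measure (Fin n → ℝ)).withDensity
          (fun x => ∏ i, gaussianPDF 0 1 (x i))) := by
        rw [← IH]; infer_instance
      have hfm : Measurable fun x : Fin n → ℝ => ∏ i, gaussianPDF 0 1 (x i) :=
        Finset.measurable_prod _ fun i _ =>
          (measurable_gaussianPDF 0 1).comp (measurable_pi_apply i)
      have h3 : (gaussianReal 0 1).prod (Measure.pi fun _ : Fin n => gaussianReal 0 1)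
          = ((volume : Measure ℝ).prod (volume : Measure (Fin n → ℝ))).withDensity
              (fun p => gaussianPDF 0 1 p.1 * ∏ i, gaussianPDF 0 1 (p.2 i)) := by
        rw [IH, hγ]
        exact aux_prod_withDensity (measurable_gaussianPDF 0 1) hfm
      rw [h2, h3]
      have hdens : (fun p : ℝ × (Fin n → ℝ) =>
            gaussianPDF 0 1 p.1 * ∏ i, gaussianPDF 0 1 (p.2 i))
          = fun p => ∏ i : Fin (n+1), gaussianPDF 0 1 ((e.symm p) i) := by
        funext p
        rw [Fin.prod_univ_succAbove (fun i => gaussianPDF 0 1 ((e.symm p) i)) 0]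
        simp [he, MeasurableEquiv.piFinSuccAbove]
      rw [hdens]
      exact aux_map_withDensity e.symm h1
        (fun x : Fin (n+1) → ℝ => ∏ i, gaussianPDF 0 1 (x i))
        (Finset.measurable_prod _ fun i _ =>
          (measurable_gaussianPDF 0 1).comp (measurable_pi_apply i))

lemma aux_inner {n : ℕ} (u w : EuclideanSpace ℝ (Fin n)) :
    (inner ℝ u w : ℝ) = ∑ i, u i * w i := by
  simp [PiLp.inner_apply, RCLike.inner_apply, conj_trivial, mul_comm]

lemma aux_sum_sq_eq_norm {n : ℕ} (x : EuclideanSpace ℝ (Fin n)) :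
    ∑ i, x i ^ 2 = ‖x‖ ^ 2 := by
  rw [EuclideanSpace.norm_eq, Real.sq_sqrt (by positivity)]
  simp [Real.norm_eq_abs, sq_abs]

lemma aux_marginal {n : ℕ} [NeZero n] (h01 : (0 : Fin n) ≠ 1) :
    Measure.map (fun x : Fin n → ℝ => (x 0, x 1)) (Measure.pi fun _ => gaussianReal 0 1)
      = (gaussianReal 0 1).prod (gaussianReal 0 1) := by
  classical
  refine (Measure.prod_eq fun s t hs ht => ?_).symm
  have hm : Measurable fun x : Fin n → ℝ => (x 0, x 1) :=
    (measurable_pi_apply 0).prodMk (measurable_pi_apply 1)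
  rw [Measure.map_apply hm (hs.prod ht)]
  have hset : (fun x : Fin n → ℝ => (x 0, x 1)) ⁻¹' (s ×ˢ t)
      = Set.pi Set.univ (fun i => if i = 0 then s else if i = 1 then t else Set.univ) := by
    ext x
    simp only [Set.mem_preimage, Set.mem_prod, Set.mem_pi, Set.mem_univ, forall_true_left]
    constructor
    · rintro ⟨h1, h2⟩ i
      by_cases hi0 : i = 0
      · subst hi0; simpa using h1
      · by_cases hi1 : i = 1
        · subst hi1; simp [hi0, h2]
        · simp [hi0, hi1]
    · intro h
      refine ⟨by simpa using h 0, ?_⟩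
      have := h 1
      simpa [h01.symm] using this
  rw [hset, Measure.pi_pi]
  have hone : ∀ i : Fin n, i ∉ ({0, 1} : Finset (Fin n)) →
      gaussianReal 0 1 (if i = 0 then s else if i = 1 then t else Set.univ) = 1 := by
    intro i hi
    simp only [Finset.mem_insert, Finset.mem_singleton, not_or] at hi
    simp [hi.1, hi.2, measure_univ]
  rw [← Finset.prod_subset (Finset.subset_univ ({0, 1} : Finset (Fin n)))
    (fun i _ hi => hone i hi)]
  rw [Finset.prod_pair h01]
  simp [h01.symm]

lemma aux_pair_map {n : ℕ} [NeZero n] (h01 : (0 : Fin n) ≠ 1)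
    (a b : Fin n → ℝ) (ha : ∑ i, a i ^ 2 = 1) (hb : ∑ i, b i ^ 2 = 1)
    (hab : ∑ i, a i * b i = 0) :
    Measure.map (fun z : Fin n → ℝ => (∑ i, a i * z i, ∑ i, b i * z i))
        (Measure.pi fun _ => gaussianReal 0 1)
      = (gaussianReal 0 1).prod (gaussianReal 0 1) := by
  classical
  let a' : EuclideanSpace ℝ (Fin n) := WithLp.toLp 2 a
  let b' : EuclideanSpace ℝ (Fin n) := WithLp.toLp 2 b
  have hba : ∑ i, b i * a i = 0 := by
    rw [← hab]; exact Finset.sum_congr rfl fun i _ => mul_comm _ _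
  have ha' : ∑ i, a i * a i = 1 := by simpa [sq] using ha
  have hb' : ∑ i, b i * b i = 1 := by simpa [sq] using hb
  set vfun : Fin n → EuclideanSpace ℝ (Fin n) :=
    fun i => if i = 0 then a' else if i = 1 then b' else 0 with hvfun
  have hON : Orthonormal ℝ (Set.restrict {0, 1} vfun) := by
    rw [orthonormal_iff_ite]
    rintro ⟨i, hi⟩ ⟨j, hj⟩
    simp only [Set.mem_insert_iff, Set.mem_singleton_iff] at hi hj
    rcases hi with rfl | rfl <;> rcases hj with rfl | rfl <;>
      simp [Set.restrict, hvfun, h01, h01.symm, Subtype.mk.injEq, aux_inner,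
        a', b', ha', hb', hab, hba, EuclideanSpace.norm_eq, Real.norm_eq_abs, sq_abs, ha, hb]
  have hcard : Module.finrank ℝ (EuclideanSpace ℝ (Fin n)) = Fintype.card (Fin n) := by
    simp [finrank_euclideanSpace_fin]
  obtain ⟨B, hB⟩ := hON.exists_orthonormalBasis_extension_of_card_eq hcard
  have hB0 : B 0 = a' := by
    have := hB 0 (by simp); simpa [hvfun] using this
  have hB1 : B 1 = b' := by
    have := hB 1 (by simp); simpa [hvfun, h01.symm] using this
  set ρ : EuclideanSpace ℝ (Fin n) → ℝ≥0∞ := fun x => ∏ i, gaussianPDF 0 1 (x i) with hρ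
  set e := (MeasurableEquiv.toLp 2 (Fin n → ℝ)).symm with he
  have hρm : Measurable ρ := Finset.measurable_prod _ fun i _ =>
    (measurable_gaussianPDF 0 1).comp ((measurable_pi_apply i).comp e.measurable)
  set γE := (volume : Measure (EuclideanSpace ℝ (Fin n))).withDensity ρ with hγE
  have hfm : Measurable fun z : Fin n → ℝ => ∏ i, gaussianPDF 0 1 (z i) :=
    Finset.measurable_prod _ fun i _ =>
      (measurable_gaussianPDF 0 1).comp (measurable_pi_apply i)
  have hρe : ρ = fun x => (fun z : Fin n → ℝ => ∏ i, gaussianPDF 0 1 (z i)) (e x) := rfl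
  have hA : Measure.map e γE = Measure.pi fun _ : Fin n => gaussianReal 0 1 := by
    rw [aux_pi_gaussian n, hγE, hρe]
    exact aux_map_withDensity e (EuclideanSpace.volume_preserving_symm_measurableEquiv_toLp (Fin n))
      (fun z : Fin n → ℝ => ∏ i, gaussianPDF 0 1 (z i)) hfm
  have hρinv : (fun x => ρ (B.repr x)) = ρ := by
    funext x
    show (∏ i, gaussianPDF 0 1 ((B.repr x) i)) = ∏ i, gaussianPDF 0 1 (x i)
    rw [aux_prod_gaussianPDF (fun i => (B.repr x) i), aux_prod_gaussianPDF (fun i => x i)]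
    rw [aux_sum_sq_eq_norm (B.repr x), aux_sum_sq_eq_norm x, B.repr.norm_map]
  have hL : Measure.map B.repr γE = γE := by
    conv_lhs => rw [hγE, ← hρinv]
    exact aux_map_withDensity B.repr.toHomeomorph.toMeasurableEquiv
      B.repr.measurePreserving ρ hρm
  have hTm : Measurable (fun z : Fin n → ℝ => (∑ i, a i * z i, ∑ i, b i * z i)) :=
    (Finset.measurable_sum _ fun i _ => Measurable.const_mul (f := fun z : Fin n → ℝ => z i) (measurable_pi_apply i) (a i)).prodMk
      (Finset.measurable_sum _ fun i _ => Measurable.const_mul (f := fun z : Fin n → ℝ => z i) (measurable_pi_apply i) (b i))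
  have hPm : Measurable (fun w : EuclideanSpace ℝ (Fin n) => (w 0, w 1)) :=
    ((measurable_pi_apply 0).comp e.measurable).prodMk
      ((measurable_pi_apply 1).comp e.measurable)
  have hLm : Measurable (⇑B.repr) := B.repr.continuous.measurable
  rw [← hA, Measure.map_map hTm e.measurable]
  have hcomp : (fun z : Fin n → ℝ => (∑ i, a i * z i, ∑ i, b i * z i)) ∘ e
      = (fun w : EuclideanSpace ℝ (Fin n) => (w 0, w 1)) ∘ B.repr := by
    funext x
    simp only [Function.comp_apply]
    have h0 : (B.repr x) 0 = ∑ i, a i * (e x) i := by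
      rw [B.repr_apply_apply, hB0, aux_inner]; rfl
    have h1 : (B.repr x) 1 = ∑ i, b i * (e x) i := by
      rw [B.repr_apply_apply, hB1, aux_inner]; rfl
    rw [h0, h1]
  rw [hcomp, ← Measure.map_map hPm hLm, hL]
  rw [show (fun w : EuclideanSpace ℝ (Fin n) => (w 0, w 1))
      = (fun z : Fin n → ℝ => (z 0, z 1)) ∘ e from rfl]
  rw [← Measure.map_map ((measurable_pi_apply 0).prodMk (measurable_pi_apply 1)) e.measurable,
    hA, aux_marginal h01]

/-- If `X ~ N(0, I_d)`, `η ~ N(0, σ²)` is independent of `X`, `y = β·X + η` and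
`σ_y² = ‖β‖² + σ²`, then for any unit vector `v`, the law of `(v·X) y` equals the law of
`((v·β + σ_y)/2) Z₁² + ((v·β − σ_y)/2) Z₂²` for independent standard Gaussians `Z₁, Z₂`. -/
theorem stmt1 {d : ℕ} (hd : 1 ≤ d) {Ω : Type*} [MeasureSpace Ω]
    [IsProbabilityMeasure (ℙ : Measure Ω)]
    (β v : Fin d → ℝ) (hv : ∑ i, v i ^ 2 = 1) (σ : ℝ≥0) (hσ : 0 < σ)
    (X : Ω → (Fin d → ℝ)) (η : Ω → ℝ)
    (hX : Measure.map X ℙ = Measure.pi fun _ => gaussianReal 0 1)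
    (hη : Measure.map η ℙ = gaussianReal 0 (σ ^ 2))
    (hind : IndepFun X η ℙ)
    (y : Ω → ℝ) (hy : ∀ ω, y ω = (∑ i, β i * X ω i) + η ω)
    (σy : ℝ) (hσy : σy = Real.sqrt ((∑ i, β i ^ 2) + (σ : ℝ) ^ 2)) :
    Measure.map (fun ω => (∑ i, v i * X ω i) * y ω) ℙ =
      Measure.map (fun z : ℝ × ℝ =>
          ((∑ i, v i * β i) + σy) / 2 * z.1 ^ 2 + ((∑ i, v i * β i) - σy) / 2 * z.2 ^ 2)
        ((gaussianReal 0 1).prod (gaussianReal 0 1)) := by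
  have h01 : (0 : Fin (d + 1)) ≠ 1 := by
    intro h
    have h' := congrArg Fin.val h
    rw [Fin.val_zero, Fin.val_one'] at h'
    rw [Nat.mod_eq_of_lt (by omega)] at h'
    omega
  have hσR : (0 : ℝ) < (σ : ℝ) := by exact_mod_cast hσ
  set S2 := ∑ i, β i ^ 2 with hS2def
  have hS2 : 0 ≤ S2 := Finset.sum_nonneg fun i _ => sq_nonneg _
  set u := ∑ i, v i * β i with hu
  have hσy2 : σy ^ 2 = S2 + (σ : ℝ) ^ 2 := by
    rw [hσy]; exact Real.sq_sqrt (by positivity)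
  have hσyp : 0 < σy := by
    rw [hσy]; exact Real.sqrt_pos.mpr (by positivity)
  have hu2 : u ^ 2 ≤ S2 := by
    have h := Finset.sum_mul_sq_le_sq_mul_sq Finset.univ v β
    rw [hv] at h; simpa [hu, hS2def] using h
  have husq : u ^ 2 < σy ^ 2 := by nlinarith
  have h1p : 0 < σy + u := by nlinarith
  have h1m : 0 < σy - u := by nlinarith
  set A := Real.sqrt (2 * (σy + u) / σy) with hA
  set Bc := Real.sqrt (2 * (σy - u) / σy) with hBc
  have hA2 : A ^ 2 = 2 * (σy + u) / σy := Real.sq_sqrt (by positivity)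
  have hB2 : Bc ^ 2 = 2 * (σy - u) / σy := Real.sq_sqrt (by positivity)
  have hApos : 0 < A := Real.sqrt_pos.mpr (by positivity)
  have hBpos : 0 < Bc := Real.sqrt_pos.mpr (by positivity)
  set p : Fin (d + 1) → ℝ := Fin.cons 0 v with hp
  set q : Fin (d + 1) → ℝ := Fin.cons ((σ : ℝ) / σy) (fun j => β j / σy) with hq
  set a : Fin (d + 1) → ℝ := fun i => (p i + q i) / A with ha
  set b : Fin (d + 1) → ℝ := fun i => (p i - q i) / Bc with hb
  have hpsum : ∑ i, p i ^ 2 = 1 := by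
    rw [hp, Fin.sum_univ_succ]; simpa using hv
  have hqsum : ∑ i, q i ^ 2 = 1 := by
    rw [hq, Fin.sum_univ_succ]
    simp only [Fin.cons_zero, Fin.cons_succ, div_pow]
    rw [← Finset.sum_div, ← add_div]
    rw [div_eq_one_iff_eq (by positivity)]
    rw [hσy2]; ring
  have hpq : ∑ i, p i * q i = u / σy := by
    rw [hp, hq, Fin.sum_univ_succ]
    simp only [Fin.cons_zero, Fin.cons_succ, zero_mul, zero_add]
    calc (∑ i, v i * (β i / σy)) = ∑ i, v i * β i / σy :=
          Finset.sum_congr rfl fun i _ => (mul_div_assoc _ _ _).symm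
      _ = u / σy := by rw [← Finset.sum_div, ← hu]
  have hasum : ∑ i, a i ^ 2 = 1 := by
    calc ∑ i, a i ^ 2 = (∑ i, (p i ^ 2 + 2 * (p i * q i) + q i ^ 2)) / A ^ 2 := by
          rw [Finset.sum_div]
          exact Finset.sum_congr rfl fun i _ => by simp only [ha]; rw [div_pow]; ring_nf
      _ = (∑ i, p i ^ 2 + 2 * ∑ i, p i * q i + ∑ i, q i ^ 2) / A ^ 2 := by
          rw [Finset.sum_add_distrib, Finset.sum_add_distrib, Finset.mul_sum]
      _ = 1 := by
          rw [hpsum, hqsum, hpq, hA2]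
          field_simp
          ring
  have hbsum : ∑ i, b i ^ 2 = 1 := by
    calc ∑ i, b i ^ 2 = (∑ i, (p i ^ 2 - 2 * (p i * q i) + q i ^ 2)) / Bc ^ 2 := by
          rw [Finset.sum_div]
          exact Finset.sum_congr rfl fun i _ => by simp only [hb]; rw [div_pow]; ring_nf
      _ = (∑ i, p i ^ 2 - 2 * ∑ i, p i * q i + ∑ i, q i ^ 2) / Bc ^ 2 := by
          rw [Finset.sum_add_distrib, Finset.sum_sub_distrib, Finset.mul_sum]
      _ = 1 := by
          rw [hpsum, hqsum, hpq, hB2]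
          field_simp
          ring
  have habsum : ∑ i, a i * b i = 0 := by
    calc ∑ i, a i * b i = (∑ i, (p i ^ 2 - q i ^ 2)) / (A * Bc) := by
          rw [Finset.sum_div]
          exact Finset.sum_congr rfl fun i _ => by
            simp only [ha, hb]; rw [div_mul_div_comm]; ring_nf
      _ = 0 := by
          rw [Finset.sum_sub_distrib, hpsum, hqsum]
          simp
  have key : ∀ z : Fin (d + 1) → ℝ,
      (∑ i, v i * z i.succ) * ((∑ i, β i * z i.succ) + (σ : ℝ) * z 0)
        = (u + σy) / 2 * (∑ i, a i * z i) ^ 2 + (u - σy) / 2 * (∑ i, b i * z i) ^ 2 := by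
    intro z
    have hP : ∑ i, p i * z i = ∑ i, v i * z i.succ := by
      rw [hp, Fin.sum_univ_succ]; simp
    have hQ : ∑ i, q i * z i = ((σ : ℝ) * z 0 + ∑ i, β i * z i.succ) / σy := by
      rw [hq, Fin.sum_univ_succ]
      simp only [Fin.cons_zero, Fin.cons_succ]
      rw [add_div]
      congr 1
      · ring
      · calc (∑ i, β i / σy * z i.succ) = ∑ i, β i * z i.succ / σy :=
              Finset.sum_congr rfl fun i _ => by ring
          _ = (∑ i, β i * z i.succ) / σy := by rw [← Finset.sum_div]
    have haz : ∑ i, a i * z i = (∑ i, p i * z i + ∑ i, q i * z i) / A := by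
      calc ∑ i, a i * z i = ∑ i, (p i * z i + q i * z i) / A :=
            Finset.sum_congr rfl fun i _ => by simp only [ha]; ring
        _ = (∑ i, (p i * z i + q i * z i)) / A := (Finset.sum_div _ _ _).symm
        _ = (∑ i, p i * z i + ∑ i, q i * z i) / A := by rw [Finset.sum_add_distrib]
    have hbz : ∑ i, b i * z i = (∑ i, p i * z i - ∑ i, q i * z i) / Bc := by
      calc ∑ i, b i * z i = ∑ i, (p i * z i - q i * z i) / Bc :=
            Finset.sum_congr rfl fun i _ => by simp only [hb]; ring
        _ = (∑ i, (p i * z i - q i * z i)) / Bc := (Finset.sum_div _ _ _).symm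
        _ = (∑ i, p i * z i - ∑ i, q i * z i) / Bc := by rw [Finset.sum_sub_distrib]
    rw [haz, hbz, hP, hQ]
    rw [div_pow, div_pow, hA2, hB2]
    set P := ∑ i, v i * z i.succ with hPdef
    set R := ∑ i, β i * z i.succ with hRdef
    have hA0 : σy + u ≠ 0 := ne_of_gt h1p
    have hB0 : σy - u ≠ 0 := ne_of_gt h1m
    have hy0 : σy ≠ 0 := ne_of_gt hσyp
    field_simp
    ring
  -- measurability of basic maps
  have hXae : AEMeasurable X ℙ := by
    by_contra h
    rw [Measure.map_of_not_aemeasurable h] at hX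
    have h2 := congrArg (fun μ => μ Set.univ) hX
    simp [measure_univ] at h2
  have hηae : AEMeasurable η ℙ := by
    by_contra h
    rw [Measure.map_of_not_aemeasurable h] at hη
    have h2 := congrArg (fun μ => μ Set.univ) hη
    simp [measure_univ] at h2
  have hprod : Measure.map (fun ω => (X ω, η ω)) ℙ
      = (Measure.pi fun _ : Fin d => gaussianReal 0 1).prod (gaussianReal 0 (σ ^ 2)) := by
    rw [(indepFun_iff_map_prod_eq_prod_map_map hXae hηae).mp hind, hX, hη]
  set G' : (Fin d → ℝ) × ℝ → ℝ :=
    fun pr => (∑ i, v i * pr.1 i) * ((∑ i, β i * pr.1 i) + pr.2) with hG'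
  have hG'm : Measurable G' := by
    apply Measurable.mul
    · exact Finset.measurable_sum _ fun i _ =>
        Measurable.const_mul (f := fun pr : (Fin d → ℝ) × ℝ => pr.1 i) ((measurable_pi_apply i).comp measurable_fst) (v i)
    · exact (Finset.measurable_sum _ fun i _ =>
        Measurable.const_mul (f := fun pr : (Fin d → ℝ) × ℝ => pr.1 i) ((measurable_pi_apply i).comp measurable_fst) (β i)).add measurable_snd
  have step1 : Measure.map (fun ω => (∑ i, v i * X ω i) * y ω) ℙ
      = Measure.map G'
          ((Measure.pi fun _ : Fin d => gaussianReal 0 1).prod (gaussianReal 0 (σ ^ 2))) := by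
    have hmain : (fun ω => (∑ i, v i * X ω i) * y ω) = G' ∘ (fun ω => (X ω, η ω)) := by
      funext ω
      simp only [Function.comp_apply, hG']
      rw [hy ω]
    rw [hmain,
      ← AEMeasurable.map_map_of_aemeasurable hG'm.aemeasurable (hXae.prodMk hηae), hprod]
  have hν : gaussianReal 0 (σ ^ 2) = Measure.map (fun t => (σ : ℝ) * t) (gaussianReal 0 1) := by
    have h := gaussianReal_map_const_mul (μ := 0) (v := 1) ((σ : ℝ))
    rw [mul_zero] at h
    have h2 : (⟨(σ : ℝ) ^ 2, sq_nonneg _⟩ : ℝ≥0) * 1 = σ ^ 2 := by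
      apply NNReal.eq; simp; exact (NNReal.coe_pow σ 2).symm
    convert h.symm using 2
    exact h2.symm
  set e2 := MeasurableEquiv.piFinSuccAbove (fun _ : Fin (d + 1) => ℝ) 0 with he2
  have hpi : Measure.map e2 (Measure.pi fun _ : Fin (d + 1) => gaussianReal 0 1)
      = (gaussianReal 0 1).prod (Measure.pi fun _ : Fin d => gaussianReal 0 1) :=
    (measurePreserving_piFinSuccAbove (fun _ : Fin (d + 1) => gaussianReal 0 1) 0).map_eq
  set Φ : (Fin (d + 1) → ℝ) → (Fin d → ℝ) × ℝ :=
    fun z => ((fun j : Fin d => z j.succ), (σ : ℝ) * z 0) with hΦ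
  have hΦm : Measurable Φ :=
    (measurable_pi_lambda _ fun j => measurable_pi_apply j.succ).prodMk
      ((measurable_pi_apply 0).const_mul _)
  have hΦmap : Measure.map Φ (Measure.pi fun _ : Fin (d + 1) => gaussianReal 0 1)
      = (Measure.pi fun _ : Fin d => gaussianReal 0 1).prod (gaussianReal 0 (σ ^ 2)) := by
    have hcomp : Φ = (Prod.map (id : (Fin d → ℝ) → (Fin d → ℝ)) (fun t => (σ : ℝ) * t))
        ∘ (Prod.swap ∘ e2) := by
      funext z
      simp only [Function.comp_apply, Prod.map, hΦ, he2, MeasurableEquiv.piFinSuccAbove,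
        MeasurableEquiv.coe_mk, Equiv.coe_fn_mk, Prod.swap, id]
      refine Prod.ext ?_ rfl
      funext j
      simp [Fin.succAbove_zero, Fin.tail]
    have hmulm : Measurable fun t : ℝ => (σ : ℝ) * t := by
      exact measurable_const.mul measurable_id
    rw [hcomp]
    rw [← Measure.map_map (measurable_id.prodMap hmulm)
      (measurable_swap.comp e2.measurable)]
    rw [← Measure.map_map measurable_swap e2.measurable, hpi, Measure.prod_swap]
    rw [← Measure.map_prod_map _ _ measurable_id hmulm]
    rw [Measure.map_id, ← hν]
  have hTm : Measurable (fun z : Fin (d + 1) → ℝ => (∑ i, a i * z i, ∑ i, b i * z i)) :=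
    (Finset.measurable_sum _ fun i _ => Measurable.const_mul (f := fun z : Fin (d + 1) → ℝ => z i) (measurable_pi_apply i) (a i)).prodMk
      (Finset.measurable_sum _ fun i _ => Measurable.const_mul (f := fun z : Fin (d + 1) → ℝ => z i) (measurable_pi_apply i) (b i))
  have hhm : Measurable (fun pr : ℝ × ℝ =>
      (u + σy) / 2 * pr.1 ^ 2 + (u - σy) / 2 * pr.2 ^ 2) :=
    (((measurable_fst.pow_const 2).const_mul _)).add
      (((measurable_snd.pow_const 2).const_mul _))
  rw [step1, ← hΦmap, Measure.map_map hG'm hΦm]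
  have hfinal : G' ∘ Φ = (fun pr : ℝ × ℝ =>
      (u + σy) / 2 * pr.1 ^ 2 + (u - σy) / 2 * pr.2 ^ 2)
        ∘ (fun z : Fin (d + 1) → ℝ => (∑ i, a i * z i, ∑ i, b i * z i)) := by
    funext z
    simp only [Function.comp_apply, hG', hΦ]
    exact key z
  rw [hfinal, ← Measure.map_map hhm hTm, aux_pair_map h01 a b hasum hbsum habsum]
end

section
/- For any pair of real random variables $A, B$ on a common probability space, any integers $a \leq b$, and any $T \in \mathbb{R}$, we have $\Pr[|AB| \geq T] \leq \sum_{i=a}^{b} \Pr[(|A| \geq 2^i) \wedge (|B| \geq T/2^{i+1})] + \Pr[|A| \geq 2^b] + \Pr[|B| \geq T/2^a]$. -/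
open MeasureTheory

/-- For real random variables `A, B`, integers `a ≤ b` and `T ∈ ℝ`,
`Pr[|AB| ≥ T] ≤ ∑_{i=a}^{b} Pr[|A| ≥ 2^i ∧ |B| ≥ T/2^{i+1}] + Pr[|A| ≥ 2^b] + Pr[|B| ≥ T/2^a]`. -/
theorem stmt2 {Ω : Type*} [MeasurableSpace Ω] (P : Measure Ω) [IsProbabilityMeasure P]
    (A B : Ω → ℝ) (a b : ℤ) (hab : a ≤ b) (T : ℝ) :
    P {ω | T ≤ |A ω * B ω|} ≤
      (∑ i ∈ Finset.Icc a b,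
          P {ω | (2 : ℝ) ^ i ≤ |A ω| ∧ T / (2 : ℝ) ^ (i + 1) ≤ |B ω|})
        + P {ω | (2 : ℝ) ^ b ≤ |A ω|} + P {ω | T / (2 : ℝ) ^ a ≤ |B ω|} := by
  have hsub : {ω | T ≤ |A ω * B ω|} ⊆
      ((⋃ i ∈ Finset.Icc a b,
          {ω | (2 : ℝ) ^ i ≤ |A ω| ∧ T / (2 : ℝ) ^ (i + 1) ≤ |B ω|})
        ∪ {ω | (2 : ℝ) ^ b ≤ |A ω|}) ∪ {ω | T / (2 : ℝ) ^ a ≤ |B ω|} := by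
    intro ω hT
    simp only [Set.mem_setOf_eq] at hT
    rw [abs_mul] at hT
    by_cases hF : (2 : ℝ) ^ b ≤ |A ω|
    · exact Or.inl (Or.inr hF)
    by_cases hG : T / (2 : ℝ) ^ a ≤ |B ω|
    · exact Or.inr hG
    push_neg at hF hG
    have h2a : (0 : ℝ) < (2 : ℝ) ^ a := zpow_pos two_pos a
    have hTpos : 0 < T := by
      have hTa : (0 : ℝ) < T / (2 : ℝ) ^ a := lt_of_le_of_lt (abs_nonneg _) hG
      exact (div_pos_iff.mp hTa).elim (fun h => h.1)
        (fun h => absurd h.2 (not_lt.mpr h2a.le))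
    have hApos : 0 < |A ω| := by
      rcases eq_or_lt_of_le (abs_nonneg (A ω)) with h | h
      · exfalso; rw [← h, zero_mul] at hT; linarith
      · exact h
    have hBpos : 0 < |B ω| := by
      rcases eq_or_lt_of_le (abs_nonneg (B ω)) with h | h
      · exfalso; rw [← h, mul_zero] at hT; linarith
      · exact h
    set i : ℤ := Int.log 2 |A ω| with hi
    have hi1 : (2 : ℝ) ^ i ≤ |A ω| := by
      have := Int.zpow_log_le_self (b := 2) (by norm_num) hApos
      exact_mod_cast this
    have hi2 : |A ω| < (2 : ℝ) ^ (i + 1) := by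
      have := Int.lt_zpow_succ_log_self (b := 2) (by norm_num) |A ω|
      exact_mod_cast this
    have hib : i ≤ b := by
      have : (2 : ℝ) ^ i < (2 : ℝ) ^ b := lt_of_le_of_lt hi1 hF
      exact le_of_lt ((zpow_lt_zpow_iff_right₀ (by norm_num : (1:ℝ) < 2)).mp this)
    have hBi : T / (2 : ℝ) ^ (i + 1) < |B ω| := by
      rw [div_lt_iff₀ (zpow_pos two_pos _)]
      calc T ≤ |A ω| * |B ω| := hT
        _ < (2 : ℝ) ^ (i + 1) * |B ω| := by
          exact mul_lt_mul_of_pos_right hi2 hBpos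
        _ = |B ω| * (2 : ℝ) ^ (i + 1) := mul_comm _ _
    have hai : a ≤ i := by
      by_contra h
      push_neg at h
      have h1 : i + 1 ≤ a := h
      have h2 : (2 : ℝ) ^ (i + 1) ≤ (2 : ℝ) ^ a :=
        zpow_le_zpow_right₀ (by norm_num : (1:ℝ) ≤ 2) h1
      have : T / (2 : ℝ) ^ a ≤ T / (2 : ℝ) ^ (i + 1) :=
        div_le_div_of_nonneg_left hTpos.le (zpow_pos two_pos _) h2
      linarith
    refine Or.inl (Or.inl ?_)
    refine Set.mem_biUnion (Finset.mem_Icc.mpr ⟨hai, hib⟩) ?_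
    exact ⟨hi1, hBi.le⟩
  calc P {ω | T ≤ |A ω * B ω|}
      ≤ P (((⋃ i ∈ Finset.Icc a b,
          {ω | (2 : ℝ) ^ i ≤ |A ω| ∧ T / (2 : ℝ) ^ (i + 1) ≤ |B ω|})
        ∪ {ω | (2 : ℝ) ^ b ≤ |A ω|}) ∪ {ω | T / (2 : ℝ) ^ a ≤ |B ω|}) :=
        measure_mono hsub
    _ ≤ P ((⋃ i ∈ Finset.Icc a b,
          {ω | (2 : ℝ) ^ i ≤ |A ω| ∧ T / (2 : ℝ) ^ (i + 1) ≤ |B ω|})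
        ∪ {ω | (2 : ℝ) ^ b ≤ |A ω|}) + P {ω | T / (2 : ℝ) ^ a ≤ |B ω|} :=
        measure_union_le _ _
    _ ≤ (P (⋃ i ∈ Finset.Icc a b,
          {ω | (2 : ℝ) ^ i ≤ |A ω| ∧ T / (2 : ℝ) ^ (i + 1) ≤ |B ω|})
        + P {ω | (2 : ℝ) ^ b ≤ |A ω|}) + P {ω | T / (2 : ℝ) ^ a ≤ |B ω|} := by
        gcongr
        exact measure_union_le _ _
    _ ≤ _ := by
        gcongr
        exact measure_biUnion_finset_le _ _
end

section
/- Let $\mu_1, \mu_2 \in \mathbb{R}$ and $\sigma_1, \sigma_2 > 0$ with $\sigma_1^2 + \sigma_2^2 > \sigma_1^2\sigma_2^2$. Then the correlation of $\mathcal{N}(\mu_1,\sigma_1^2)$ and $\mathcal{N}(\mu_2,\sigma_2^2)$ relative to $\mathcal{N}(0,1)$ satisfies $\chi_{\mathcal{N}(0,1)}(\mathcal{N}(\mu_1,\sigma_1^2), \mathcal{N}(\mu_2,\sigma_2^2)) = \frac{\exp\left(-\frac{\mu_1^2(\sigma_2^2-1) + 2\mu_1\mu_2 + \mu_2^2(\sigma_1^2-1)}{2\sigma_1^2(\sigma_2^2-1)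 - 2\sigma_2^2}\right)}{\sqrt{\sigma_1^2 + \sigma_2^2 - \sigma_1^2\sigma_2^2}} - 1$. -/
open MeasureTheory Real

/-- Density of the one-dimensional Gaussian with mean `μ` and variance `v`. -/
noncomputable def gaussPdf (μ v x : ℝ) : ℝ :=
  (Real.sqrt (2 * Real.pi * v))⁻¹ * Real.exp (-(x - μ) ^ 2 / (2 * v))

/-- Correlation of two Gaussians relative to `N(0,1)`:
`χ_{N(0,1)}(N(μ₁,σ₁²), N(μ₂,σ₂²)) = exp(−(μ₁²(σ₂²−1) + 2μ₁μ₂ + μ₂²(σ₁²−1)) /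
(2σ₁²(σ₂²−1) − 2σ₂²)) / √(σ₁² + σ₂² − σ₁²σ₂²) − 1`,
where `χ_g(p,q) = ∫ p q / g − 1`. -/
theorem stmt7 (μ1 μ2 σ1 σ2 : ℝ) (h1 : 0 < σ1) (h2 : 0 < σ2)
    (hpos : 0 < σ1 ^ 2 + σ2 ^ 2 - σ1 ^ 2 * σ2 ^ 2)
    (hne : 2 * σ1 ^ 2 * (σ2 ^ 2 - 1) - 2 * σ2 ^ 2 ≠ 0) :
    (∫ x : ℝ, gaussPdf μ1 (σ1 ^ 2) x * gaussPdf μ2 (σ2 ^ 2) x / gaussPdf 0 1 x) - 1 =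
      Real.exp (-((μ1 ^ 2 * (σ2 ^ 2 - 1) + 2 * μ1 * μ2 + μ2 ^ 2 * (σ1 ^ 2 - 1)) /
          (2 * σ1 ^ 2 * (σ2 ^ 2 - 1) - 2 * σ2 ^ 2))) /
        Real.sqrt (σ1 ^ 2 + σ2 ^ 2 - σ1 ^ 2 * σ2 ^ 2) - 1 := by
  have hπ : (0:ℝ) < Real.pi := Real.pi_pos
  set v1 : ℝ := σ1 ^ 2 with hv1
  set v2 : ℝ := σ2 ^ 2 with hv2
  have hv1p : 0 < v1 := by positivity
  have hv2p : 0 < v2 := by positivity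
  have hv1n : v1 ≠ 0 := ne_of_gt hv1p
  have hv2n : v2 ≠ 0 := ne_of_gt hv2p
  set b : ℝ := (v1 + v2 - v1 * v2) / (2 * v1 * v2) with hb
  have hbp : 0 < b := div_pos hpos (by positivity)
  have hbn : b ≠ 0 := ne_of_gt hbp
  set l : ℝ := μ1 / v1 + μ2 / v2 with hl
  set d : ℝ := l / (2 * b) with hd
  set K : ℝ := l ^ 2 / (4 * b) - μ1 ^ 2 / (2 * v1) - μ2 ^ 2 / (2 * v2) with hK
  set C : ℝ := Real.sqrt (2 * Real.pi) / (Real.sqrt (2 * Real.pi * v1) * Real.sqrt (2 * Real.pi * v2)) with hC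
  have hfun : ∀ x : ℝ, gaussPdf μ1 v1 x * gaussPdf μ2 v2 x / gaussPdf 0 1 x
      = C * Real.exp K * Real.exp (-b * (x - d) ^ 2) := by
    intro x
    unfold gaussPdf
    rw [mul_one]
    have hg : (Real.sqrt (2 * Real.pi))⁻¹ * Real.exp (-(x - 0) ^ 2 / (2 * 1)) ≠ 0 := by
      positivity
    rw [div_eq_iff hg]
    have hs1 : Real.sqrt (2 * Real.pi * v1) ≠ 0 := by positivity
    have hs2 : Real.sqrt (2 * Real.pi * v2) ≠ 0 := by positivity
    have hs : Real.sqrt (2 * Real.pi) ≠ 0 := by positivity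
    have hc : C * (Real.sqrt (2 * Real.pi))⁻¹
        = (Real.sqrt (2 * Real.pi * v1))⁻¹ * (Real.sqrt (2 * Real.pi * v2))⁻¹ := by
      rw [hC]; field_simp
    have hexp : Real.exp (-(x - μ1) ^ 2 / (2 * v1)) * Real.exp (-(x - μ2) ^ 2 / (2 * v2))
        = Real.exp K * Real.exp (-b * (x - d) ^ 2) * Real.exp (-(x - 0) ^ 2 / (2 * 1)) := by
      rw [← Real.exp_add, ← Real.exp_add, ← Real.exp_add]
      congr 1
      rw [hK, hd, hl, hb]
      have hS : (v1 + v2 - v1 * v2) ≠ 0 := ne_of_gt hpos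
      field_simp
      ring
    calc (Real.sqrt (2 * Real.pi * v1))⁻¹ * Real.exp (-(x - μ1) ^ 2 / (2 * v1)) *
          ((Real.sqrt (2 * Real.pi * v2))⁻¹ * Real.exp (-(x - μ2) ^ 2 / (2 * v2)))
        = ((Real.sqrt (2 * Real.pi * v1))⁻¹ * (Real.sqrt (2 * Real.pi * v2))⁻¹) *
          (Real.exp (-(x - μ1) ^ 2 / (2 * v1)) * Real.exp (-(x - μ2) ^ 2 / (2 * v2))) := by ring
      _ = (C * (Real.sqrt (2 * Real.pi))⁻¹) *
          (Real.exp K * Real.exp (-b * (x - d) ^ 2) * Real.exp (-(x - 0) ^ 2 / (2 * 1))) := by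
            rw [hc, hexp]
      _ = C * Real.exp K * Real.exp (-b * (x - d) ^ 2) *
          ((Real.sqrt (2 * Real.pi))⁻¹ * Real.exp (-(x - 0) ^ 2 / (2 * 1))) := by ring
  rw [show (∫ x : ℝ, gaussPdf μ1 v1 x * gaussPdf μ2 v2 x / gaussPdf 0 1 x)
      = ∫ x : ℝ, C * Real.exp K * Real.exp (-b * (x - d) ^ 2) from by
        exact integral_congr_ae (Filter.Eventually.of_forall hfun)]
  rw [MeasureTheory.integral_const_mul]
  rw [MeasureTheory.integral_sub_right_eq_self (fun x => Real.exp (-b * x ^ 2)) d]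
  rw [integral_gaussian]
  congr 1
  -- goal: C * exp K * √(π/b) = exp(target) / √(v1+v2-v1v2)
  have h2b : 2 * (v1 * (v2 * b)) = v1 + v2 - v1 * v2 := by
    rw [hb]; field_simp
  have hCval : C * Real.sqrt (Real.pi / b) = (Real.sqrt (v1 + v2 - v1 * v2))⁻¹ := by
    rw [← h2b, hC]
    rw [show (2 : ℝ) * Real.pi * v1 = 2 * (Real.pi * v1) from by ring,
        show (2 : ℝ) * Real.pi * v2 = 2 * (Real.pi * v2) from by ring]
    rw [Real.sqrt_mul (by norm_num : (0:ℝ) ≤ 2), Real.sqrt_mul (by norm_num : (0:ℝ) ≤ 2),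
        Real.sqrt_mul (by norm_num : (0:ℝ) ≤ 2), Real.sqrt_mul (by norm_num : (0:ℝ) ≤ 2),
        Real.sqrt_mul hπ.le, Real.sqrt_mul hπ.le,
        Real.sqrt_mul hv1p.le, Real.sqrt_div hπ.le]
    have e2 : Real.sqrt 2 ≠ 0 := by positivity
    have eπ : Real.sqrt Real.pi ≠ 0 := by positivity
    have e1 : Real.sqrt v1 ≠ 0 := by positivity
    have e2' : Real.sqrt v2 ≠ 0 := by positivity
    have eb : Real.sqrt b ≠ 0 := by positivity
    field_simp
    rw [Real.sqrt_mul hv2p.le]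
  have hKval : K = -((μ1 ^ 2 * (v2 - 1) + 2 * μ1 * μ2 + μ2 ^ 2 * (v1 - 1)) /
      (2 * v1 * (v2 - 1) - 2 * v2)) := by
    rw [hK, hl, hb]
    have hS : (v1 + v2 - v1 * v2) ≠ 0 := ne_of_gt hpos
    have hne' : v1 * (v2 - 1) - v2 ≠ 0 := by intro h; apply hne; linear_combination 2 * h
    field_simp
    ring
  rw [show C * Real.exp K * Real.sqrt (Real.pi / b)
      = (C * Real.sqrt (Real.pi / b)) * Real.exp K from by ring, hCval, hKval]
  exact inv_mul_eq_div _ _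
end

section
/- Let $D$ be a probability distribution on $\mathbb{R}$ such that $\Pr_D[|Z| > T] \leq 2\exp(-T^2/2s^2)$ for all $T > 0$ and some $s > 0$. Let $E$ be an event with $\Pr_D[E] = \alpha \in (0, 1/2]$ and let $D'$ be $D$ conditioned on $E$. Then $\alpha\, \mathbb{E}_{D'}[Z^4] = O(\alpha \log^2(1/\alpha)\, s^4)$. -/
open MeasureTheory Set

section Helpers

lemma tail_deriv (s : ℝ) (hs : 0 < s) (T : ℝ) :
    HasDerivAt (fun T : ℝ => -((8*s^2*T^2 + 16*s^4) * Real.exp (-T^2/(2*s^2))))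
      (8*T^3 * Real.exp (-T^2/(2*s^2))) T := by
  have hq : HasDerivAt (fun T : ℝ => -T^2/(2*s^2)) (-(2*T)/(2*s^2)) T := by
    exact (((hasDerivAt_pow 2 T).neg).div_const (2*s^2)).congr_deriv (by ring)
  have he := hq.exp
  have hp : HasDerivAt (fun T : ℝ => 8*s^2*T^2 + 16*s^4) (8*s^2*(2*T)) T := by
    simpa using (((hasDerivAt_pow 2 T).const_mul (8*s^2)).add_const (16*s^4))
  have := (hp.mul he).neg
  refine HasDerivAt.congr_deriv this ?_
  have h2 : (2:ℝ)*s^2 ≠ 0 := by positivity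
  field_simp
  ring

lemma tail_integral (s t₀ : ℝ) (hs : 0 < s) (ht : 0 ≤ t₀) :
    IntegrableOn (fun T => 8*T^3 * Real.exp (-T^2/(2*s^2))) (Ioi t₀) ∧
    ∫ T in Ioi t₀, 8*T^3 * Real.exp (-T^2/(2*s^2))
      = (8*s^2*t₀^2 + 16*s^4) * Real.exp (-t₀^2/(2*s^2)) := by
  have hderiv : ∀ x ∈ Ici t₀, HasDerivAt
      (fun T : ℝ => -((8*s^2*T^2 + 16*s^4) * Real.exp (-T^2/(2*s^2))))
      (8*x^3 * Real.exp (-x^2/(2*s^2))) x := fun x _ => tail_deriv s hs x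
  have hnn : ∀ x ∈ Ioi t₀, 0 ≤ 8*x^3 * Real.exp (-x^2/(2*s^2)) := by
    intro x hx
    have hx0 : 0 < x := lt_of_le_of_lt ht hx
    positivity
  have htends : Filter.Tendsto
      (fun T : ℝ => -((8*s^2*T^2 + 16*s^4) * Real.exp (-T^2/(2*s^2))))
      Filter.atTop (nhds 0) := by
    have hinner : Filter.Tendsto (fun T : ℝ => T^2/(2*s^2)) Filter.atTop Filter.atTop := by
      exact (Filter.tendsto_pow_atTop (two_ne_zero)).atTop_div_const (by positivity)
    have houter : Filter.Tendsto (fun u : ℝ => -((16*s^4*u + 16*s^4) * Real.exp (-u)))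
        Filter.atTop (nhds 0) := by
      have h1 := Real.tendsto_pow_mul_exp_neg_atTop_nhds_zero 1
      have h2 := Real.tendsto_exp_neg_atTop_nhds_zero
      have h4 : (fun u:ℝ => -((16*s^4*u + 16*s^4) * Real.exp (-u)))
          = fun u => -((16*s^4)*(u^1*Real.exp (-u)) + (16*s^4)*Real.exp (-u)) := by
        funext u; ring
      rw [h4]
      simpa using (((h1.const_mul (16*s^4)).add (h2.const_mul (16*s^4))).neg)
    have := houter.comp hinner
    refine this.congr fun T => ?_
    have h2 : (2:ℝ)*s^2 ≠ 0 := by positivity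
    simp only [Function.comp]
    rw [neg_div]
    field_simp
    ring
  refine ⟨integrableOn_Ioi_deriv_of_nonneg' hderiv hnn htends, ?_⟩
  rw [integral_Ioi_of_hasDerivAt_of_nonneg' hderiv hnn htends]
  ring

end Helpers

/-- If `D` is a distribution on `ℝ` with sub-Gaussian tail `Pr[|Z| > T] ≤ 2 exp(−T²/2s²)`,
`E` is an event of probability `α ∈ (0, 1/2]`, and `D'` is `D` conditioned on `E`, then
`α 𝔼_{D'}[Z⁴] = O(α log²(1/α) s⁴)` with an absolute constant; note
`α 𝔼_{D'}[Z⁴] = ∫_E x⁴ dD`. -/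
theorem stmt11 : ∃ C > (0 : ℝ), ∀ (μ : Measure ℝ), IsProbabilityMeasure μ →
    ∀ s : ℝ, 0 < s →
    (∀ T > (0 : ℝ), μ {x | T < |x|} ≤ ENNReal.ofReal (2 * Real.exp (-T ^ 2 / (2 * s ^ 2)))) →
    ∀ E : Set ℝ, MeasurableSet E → ∀ α : ℝ, 0 < α → α ≤ 1 / 2 →
    μ E = ENNReal.ofReal α →
    (∫ x in E, x ^ 4 ∂μ) ≤ C * (α * (Real.log (1 / α)) ^ 2 * s ^ 4) := by
  refine ⟨100, by norm_num, ?_⟩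
  intro μ _ s hs htail E hE α hα hα2 hμE
  set L : ℝ := Real.log (1 / α) with hLdef
  have hLlog2 : Real.log 2 ≤ L := by
    apply Real.log_le_log two_pos
    rw [le_div_iff₀ hα]; linarith
  have hlog2 : (0.6931:ℝ) < Real.log 2 := by
    have := Real.log_two_gt_d9; linarith
  have hL : 0 < L := lt_of_lt_of_le (by linarith) hLlog2
  set t₀ : ℝ := Real.sqrt (2 * L) * s with ht₀def
  have ht₀pos : 0 < t₀ := by
    apply mul_pos (Real.sqrt_pos.2 (by linarith)) hs
  have ht₀sq : t₀ ^ 2 = 2 * L * s ^ 2 := by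
    rw [ht₀def, mul_pow, Real.sq_sqrt (by linarith : (0:ℝ) ≤ 2 * L)]
  have hexp : Real.exp (-t₀ ^ 2 / (2 * s ^ 2)) = α := by
    rw [ht₀sq]
    have h1 : -(2 * L * s ^ 2) / (2 * s ^ 2) = -L := by
      field_simp
    rw [h1, hLdef, one_div, Real.log_inv, neg_neg, Real.exp_log hα]
  -- step A: Bochner → lintegral
  rw [integral_eq_lintegral_of_nonneg_ae (ae_of_all _ fun x => by positivity)
    (by fun_prop)]
  apply ENNReal.toReal_le_of_le_ofReal (by positivity)
  -- step B: layer cake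
  have hg_cont : Continuous fun t : ℝ => 4 * t ^ 3 := by continuity
  have hlc := lintegral_comp_eq_lintegral_meas_lt_mul (μ.restrict E)
    (f := fun x => |x|) (g := fun t => 4 * t ^ 3)
    (ae_of_all _ fun x => abs_nonneg x) measurable_abs.aemeasurable
    (fun t _ => hg_cont.intervalIntegrable 0 t)
    ((ae_restrict_iff' measurableSet_Ioi).2 (ae_of_all _ fun t ht => by
      have : (0:ℝ) < t := ht; positivity))
  have hG : ∀ ω : ℝ, (∫ t in (0:ℝ)..|ω|, 4 * t ^ 3) = ω ^ 4 := by
    intro ω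
    rw [intervalIntegral.integral_const_mul, integral_pow]
    have habs : |ω| ^ (3+1) = ω ^ 4 := by
      rw [show (3+1) = 4 from rfl, pow_abs, abs_of_nonneg (by positivity : (0:ℝ) ≤ ω ^ 4)]
    rw [habs]; push_cast; ring
  have hmain : ∫⁻ x in E, ENNReal.ofReal (x ^ 4) ∂μ
      = ∫⁻ t in Ioi 0, (μ.restrict E) {a | t < |a|} * ENNReal.ofReal (4 * t ^ 3) := by
    rw [← hlc]
    exact lintegral_congr fun ω => by rw [hG ω]
  rw [hmain, ← Ioc_union_Ioi_eq_Ioi ht₀pos.le,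
    lintegral_union measurableSet_Ioi (Ioc_disjoint_Ioi le_rfl)]
  -- piece 1
  have hb1 : ∫⁻ t in Ioc 0 t₀, (μ.restrict E) {a | t < |a|} * ENNReal.ofReal (4 * t ^ 3)
      ≤ ENNReal.ofReal α * ENNReal.ofReal (t₀ ^ 4) := by
    have step1 : ∫⁻ t in Ioc 0 t₀, (μ.restrict E) {a | t < |a|} * ENNReal.ofReal (4 * t ^ 3)
        ≤ ∫⁻ t in Ioc 0 t₀, ENNReal.ofReal α * ENNReal.ofReal (4 * t ^ 3) := by
      apply setLIntegral_mono (by fun_prop)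
      intro t _
      apply mul_le_mul_left
      calc (μ.restrict E) {a | t < |a|} ≤ (μ.restrict E) univ :=
            measure_mono (subset_univ _)
        _ = μ E := Measure.restrict_apply_univ E
        _ = ENNReal.ofReal α := hμE
    refine step1.trans_eq ?_
    rw [lintegral_const_mul _ (by fun_prop)]
    congr 1
    have hint : Integrable (fun t => 4 * t ^ 3) (volume.restrict (Ioc 0 t₀)) :=
      (hg_cont.intervalIntegrable 0 t₀).1
    have hnn : 0 ≤ᵐ[volume.restrict (Ioc 0 t₀)] fun t => 4 * t ^ 3 :=
      (ae_restrict_iff' measurableSet_Ioc).2 (ae_of_all _ fun t ht => by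
        have : (0:ℝ) < t := ht.1; positivity)
    rw [← ofReal_integral_eq_lintegral_ofReal hint hnn]
    congr 1
    rw [← intervalIntegral.integral_of_le ht₀pos.le,
      intervalIntegral.integral_const_mul, integral_pow]
    push_cast; ring
  -- piece 2
  have hb2 : ∫⁻ t in Ioi t₀, (μ.restrict E) {a | t < |a|} * ENNReal.ofReal (4 * t ^ 3)
      ≤ ENNReal.ofReal ((8 * s ^ 2 * t₀ ^ 2 + 16 * s ^ 4) * Real.exp (-t₀ ^ 2 / (2 * s ^ 2))) := by
    have step1 : ∫⁻ t in Ioi t₀, (μ.restrict E) {a | t < |a|} * ENNReal.ofReal (4 * t ^ 3)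
        ≤ ∫⁻ t in Ioi t₀, ENNReal.ofReal (8 * t ^ 3 * Real.exp (-t ^ 2 / (2 * s ^ 2))) := by
      apply setLIntegral_mono (by fun_prop)
      intro t ht
      have htpos : (0:ℝ) < t := ht₀pos.trans ht
      calc (μ.restrict E) {a | t < |a|} * ENNReal.ofReal (4 * t ^ 3)
          ≤ ENNReal.ofReal (2 * Real.exp (-t ^ 2 / (2 * s ^ 2))) * ENNReal.ofReal (4 * t ^ 3) := by
            apply mul_le_mul_left
            calc (μ.restrict E) {a | t < |a|} = μ ({a | t < |a|} ∩ E) :=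
                  Measure.restrict_apply' hE
              _ ≤ μ {a | t < |a|} := measure_mono inter_subset_left
              _ ≤ _ := htail t htpos
        _ = ENNReal.ofReal (8 * t ^ 3 * Real.exp (-t ^ 2 / (2 * s ^ 2))) := by
            rw [← ENNReal.ofReal_mul (by positivity)]
            congr 1; ring
    refine step1.trans_eq ?_
    have hti := tail_integral s t₀ hs ht₀pos.le
    have hnn : 0 ≤ᵐ[volume.restrict (Ioi t₀)] fun t => 8 * t ^ 3 * Real.exp (-t ^ 2 / (2 * s ^ 2)) :=
      (ae_restrict_iff' measurableSet_Ioi).2 (ae_of_all _ fun t ht => by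
        have : (0:ℝ) < t := ht₀pos.trans ht; positivity)
    rw [← ofReal_integral_eq_lintegral_ofReal hti.1 hnn, hti.2]
  refine (add_le_add hb1 hb2).trans ?_
  rw [hexp, ← ENNReal.ofReal_mul hα.le, ← ENNReal.ofReal_add (by positivity) (by positivity)]
  apply ENNReal.ofReal_le_ofReal
  have ht₀4 : t₀ ^ 4 = 4 * L ^ 2 * s ^ 4 := by
    have : t₀ ^ 4 = (t₀ ^ 2) ^ 2 := by ring
    rw [this, ht₀sq]; ring
  rw [ht₀4, ht₀sq]
  have key : 16 * L + 16 ≤ 96 * L ^ 2 := by nlinarith [sq_nonneg (L - 0.6931)]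
  have h4 : (0:ℝ) ≤ α * s ^ 4 := by positivity
  nlinarith [mul_le_mul_of_nonneg_left key h4]
end
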